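/- Any deterministic algorithm (modeled as a deterministic finite-state automaton with query function) that, for every binary stream, outputs at every time an estimate within additive error Wε of the number of 1's among the last W bits, must have at least 2^z states, where z = ⌊W / ⌊2Wε+1⌋⌋. -/

import Mathlib

namespace Stmt0Aux

/-- `blocks k x a n` : concatenation of `n` blocks, block `j` being `k` copies of `x (a+j)`. -/
def blocks (k : ℕ) (x : ℕ → Bool) : ℕ → ℕ → List Bool
  | _, 0 => []
  | a, n+1 => List.replicate k (x a) ++ blocks k x (a+1) n

/-- number of `true`s in `blocks k x a n`. -/
def cnt (k : ℕ) (x : ℕ → Bool) : ℕ → ℕ → ℕ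
  | _, 0 => 0
  | a, n+1 => (if x a then k else 0) + cnt k x (a+1) n

lemma length_blocks (k : ℕ) (x : ℕ → Bool) (n : ℕ) : ∀ a, (blocks k x a n).length = n * k := by
  induction n with
  | zero => intro a; simp [blocks]
  | succ n ih => intro a; simp [blocks, ih, Nat.succ_mul, Nat.add_comm]

lemma count_blocks (k : ℕ) (x : ℕ → Bool) (n : ℕ) :
    ∀ a, (blocks k x a n).count true = cnt k x a n := by
  induction n with
  | zero => intro a; simp [blocks, cnt]
  | succ n ih =>
    intro a
    simp only [blocks, cnt, List.count_append, ih, List.count_replicate]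
    cases h : x a <;> simp

lemma blocks_add (k : ℕ) (x : ℕ → Bool) (m n : ℕ) :
    ∀ a, blocks k x a (m + n) = blocks k x a m ++ blocks k x (a + m) n := by
  induction m with
  | zero => intro a; simp [blocks]
  | succ m ih =>
    intro a
    have : m + 1 + n = (m + n) + 1 := by omega
    rw [this]
    simp only [blocks, ih (a+1), List.append_assoc]
    have h2 : a + 1 + m = a + (m + 1) := by omega
    rw [h2]

lemma cnt_congr (k : ℕ) (x y : ℕ → Bool) (n : ℕ) :
    ∀ a, (∀ j, a ≤ j → j < a + n → x j = y j) → cnt k x a n = cnt k y a n := by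
  induction n with
  | zero => intro a _; simp [cnt]
  | succ n ih =>
    intro a h
    simp only [cnt]
    rw [h a le_rfl (by omega), ih (a+1) (fun j h1 h2 => h j (by omega) (by omega))]

end Stmt0Aux

open Stmt0Aux in
theorem stmt_0 (W : ℕ) (ε : ℝ) (hW : 0 < W) (hε : 0 < ε) (hWε : 1 ≤ 2 * (W : ℝ) * ε)
    (S : Type*) [Fintype S] (s₀ : S) (δ : S → Bool → S) (q : S → ℝ)
    (hcorrect : ∀ w : List Bool, W ≤ w.length →
      |q (w.foldl δ s₀) - ((w.drop (w.length - W)).count true : ℝ)| ≤ (W : ℝ) * ε) :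
    2 ^ (W / ⌊2 * (W : ℝ) * ε + 1⌋₊) ≤ Fintype.card S := by
  set k : ℕ := ⌊2 * (W : ℝ) * ε + 1⌋₊ with hkdef
  set z : ℕ := W / k with hzdef
  have hk2 : 2 * (W : ℝ) * ε < k := by
    have := Nat.lt_floor_add_one (2 * (W : ℝ) * ε + 1)
    push_cast at this ⊢
    linarith
  have hk1 : 1 ≤ k := by
    have : (1 : ℝ) ≤ 2 * (W : ℝ) * ε + 1 := by linarith
    exact_mod_cast Nat.le_floor (by exact_mod_cast this)
  have hzk : z * k ≤ W := Nat.div_mul_le_self W k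
  set p : ℕ := W - z * k with hpdef
  have hpzk : p + z * k = W := by omega
  -- extension of a Fin tuple to ℕ → Bool
  set ext : (Fin z → Bool) → ℕ → Bool :=
    fun x j => if h : j < z then x ⟨j, h⟩ else false with hext
  set F : (Fin z → Bool) → S :=
    fun x => (List.replicate p false ++ blocks k (ext x) 0 z).foldl δ s₀ with hF
  have hinj : Function.Injective F := by
    intro x y hxy
    by_contra hne
    have hT : (Finset.univ.filter (fun i : Fin z => x i ≠ y i)).Nonempty := by
      rw [Finset.filter_nonempty_iff]
      by_contra hc
      push_neg at hc
      exact hne (funext fun i => by simpa using hc i (Finset.mem_univ i))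
    set i0 : Fin z := Finset.max' _ hT with hi0
    have hi0mem := Finset.max'_mem _ hT
    rw [Finset.mem_filter] at hi0mem
    set i : ℕ := (i0 : ℕ) with hidef
    have hi : i < z := i0.isLt
    have hagree : ∀ j, i < j → ext x j = ext y j := by
      intro j hj
      simp only [hext]
      split
      · rename_i h
        by_contra hc
        have : (⟨j, h⟩ : Fin z) ∈ Finset.univ.filter (fun i : Fin z => x i ≠ y i) := by
          simp only [Finset.mem_filter, Finset.mem_univ, true_and]
          simpa using hc
        have hle := Finset.le_max' _ _ this
        rw [Fin.le_def] at hle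
        simp only [Fin.val_mk] at hle
        omega
      · rfl
    set t : ℕ := p + i * k with ht
    have key : ∀ u : Fin z → Bool,
        |q ((List.replicate t false).foldl δ (F u)) - (cnt k (ext u) i (z - i) : ℝ)|
          ≤ (W : ℝ) * ε := by
      intro u
      set w : List Bool := (List.replicate p false ++ blocks k (ext u) 0 z)
        ++ List.replicate t false with hw
      have hwlen : w.length = W + t := by
        simp only [hw, List.length_append, List.length_replicate, length_blocks]
        omega
      have hfold : w.foldl δ s₀ = (List.replicate t false).foldl δ (F u) := by
        rw [hw, List.foldl_append]
      have hdrop : (w.drop (w.length - W)).count true = cnt k (ext u) i (z - i) := by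
        have hsplit : blocks k (ext u) 0 z
            = blocks k (ext u) 0 i ++ blocks k (ext u) i (z - i) := by
          have hz : z = i + (z - i) := by omega
          rw [hz, blocks_add]
          simp
        have hw2 : w = (List.replicate p false ++ blocks k (ext u) 0 i)
            ++ (blocks k (ext u) i (z - i) ++ List.replicate t false) := by
          rw [hw, hsplit]
          simp [List.append_assoc]
        have hlen1 : (List.replicate p false ++ blocks k (ext u) 0 i).length = t := by
          simp [length_blocks, ht]
        have hwW : w.length - W = t := by omega
        rw [hwW, hw2, ← hlen1, List.drop_left]
        simp [List.count_append, count_blocks, List.count_replicate]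
      have := hcorrect w (by omega)
      rw [hfold, hdrop] at this
      exact this
    have hqx := key x
    have hqy := key y
    rw [hxy] at hqx
    -- the two counts differ by exactly k
    have hcx : cnt k (ext x) i (z - i)
        = (if ext x i then k else 0) + cnt k (ext x) (i+1) (z - i - 1) := by
      have hz : z - i = (z - i - 1) + 1 := by omega
      rw [hz]; rfl
    have hcy : cnt k (ext y) i (z - i)
        = (if ext y i then k else 0) + cnt k (ext y) (i+1) (z - i - 1) := by
      have hz : z - i = (z - i - 1) + 1 := by omega
      rw [hz]; rfl
    have htails : cnt k (ext x) (i+1) (z - i - 1) = cnt k (ext y) (i+1) (z - i - 1) :=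
      cnt_congr _ _ _ _ _ (fun j h1 _ => hagree j (by omega))
    have hxi : ext x i = x i0 := by
      simp only [hext, hi, dif_pos]; rfl
    have hyi : ext y i = y i0 := by
      simp only [hext, hi, dif_pos]; rfl
    have hdiff : |(cnt k (ext x) i (z - i) : ℝ) - (cnt k (ext y) i (z - i) : ℝ)| = k := by
      rw [hcx, hcy, htails, hxi, hyi]
      rw [← hi0] at hi0mem
      rcases Bool.eq_false_or_eq_true (x i0) with h1 | h1 <;>
        rcases Bool.eq_false_or_eq_true (y i0) with h2 | h2 <;>
          simp [h1, h2] at hi0mem ⊢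
    have : (k : ℝ) ≤ 2 * (W : ℝ) * ε := by
      rw [abs_sub_comm] at hqx
      calc (k : ℝ) = |(cnt k (ext x) i (z - i) : ℝ) - (cnt k (ext y) i (z - i) : ℝ)| :=
            hdiff.symm
        _ ≤ |(cnt k (ext x) i (z - i) : ℝ)
                - q ((List.replicate t false).foldl δ (F y))|
              + |q ((List.replicate t false).foldl δ (F y))
                - (cnt k (ext y) i (z - i) : ℝ)| := abs_sub_le _ _ _
        _ ≤ (W : ℝ) * ε + (W : ℝ) * ε := add_le_add hqx hqy
        _ = 2 * (W : ℝ) * ε := by ring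
    linarith
  calc (2 : ℕ) ^ z = Fintype.card (Fin z → Bool) := by simp
    _ ≤ Fintype.card S := Fintype.card_le_of_injective F hinj
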